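/- Let u, v be adjacent vertices of a graph with a 3-coloring operator assignment, i.e., projections u_0,u_1,u_2 and v_0,v_1,v_2 on a finite-dimensional Hilbert space with u_0+u_1+u_2 = I, v_0+v_1+v_2 = I, the u_α pairwise commuting, the v_α pairwise commuting, and u_α v_α = v_α u_α = 0 for α = 0,1,2. Then u_α v_β = v_β u_α for all α, β ∈ {0,1,2}. -/

import Mathlib

open Matrix

/-- Three commuting projections summing to 1 are pairwise orthogonal. -/
lemma orth3 {d : ℕ} (p q r : Matrix (Fin d) (Fin d) ℂ)
    (hpq : p * q = q * p) (hp : p * p = p) (hq : q * q = q) (hr : r * r = r)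
    (hsum : p + q + r = 1) : p * q = 0 := by
  have hr' : r = 1 - p - q := by rw [← hsum]; abel
  have h1 : (1 - p - q) * (1 - p - q) = 1 - p - q := by rw [← hr']; exact hr
  have h2 : (1 - p - q) * (1 - p - q) = 1 - p - q + (q * p + p * q) := by
    simp only [sub_mul, mul_sub, mul_one, one_mul, hp, hq]
    abel
  have h3 : q * p + p * q = 0 := left_eq_add.mp (h1.symm.trans h2)
  rw [← hpq] at h3
  have h4 : (2 : ℂ) • (p * q) = 0 := by rw [two_smul]; exact h3
  rcases smul_eq_zero.mp h4 with h | h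
  · norm_num at h
  · exact h

/-- Lemma (link): in a 3-coloring operator assignment, the projections assigned to
adjacent vertices pairwise commute across all colors. -/
theorem coloring_adjacent_commute {d : ℕ}
    (u v : Fin 3 → Matrix (Fin d) (Fin d) ℂ)
    (hu_sa : ∀ α, (u α).IsHermitian) (hv_sa : ∀ α, (v α).IsHermitian)
    (hu_proj : ∀ α, u α * u α = u α) (hv_proj : ∀ α, v α * v α = v α)
    (hu_sum : u 0 + u 1 + u 2 = 1) (hv_sum : v 0 + v 1 + v 2 = 1)
    (hu_comm : ∀ α β, Commute (u α) (u β))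
    (hv_comm : ∀ α β, Commute (v α) (v β))
    (h_edge : ∀ α, u α * v α = 0 ∧ v α * u α = 0) :
    ∀ α β, u α * v β = v β * u α := by
  have huu : ∀ α β γ : Fin 3, u α + u β + u γ = 1 → u α * u β = 0 :=
    fun α β γ hs => orth3 (u α) (u β) (u γ) (hu_comm α β) (hu_proj α) (hu_proj β) (hu_proj γ) hs
  intro α β
  by_cases h : α = β
  · subst h
    rw [(h_edge α).1, (h_edge α).2]
  · -- pick the third color γ
    obtain ⟨γ, husum, hvsum⟩ :
        ∃ γ : Fin 3, u α + u β + u γ = 1 ∧ v α + v β + v γ = 1 := by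
      fin_cases α <;> fin_cases β
      · exact absurd rfl h
      · exact ⟨2, by simp only [Fin.zero_eta, Fin.mk_one, Fin.reduceFinMk]; rw [← hu_sum], by simp only [Fin.zero_eta, Fin.mk_one, Fin.reduceFinMk]; rw [← hv_sum]⟩
      · exact ⟨1, by simp only [Fin.zero_eta, Fin.mk_one, Fin.reduceFinMk]; rw [← hu_sum]; abel, by simp only [Fin.zero_eta, Fin.mk_one, Fin.reduceFinMk]; rw [← hv_sum]; abel⟩
      · exact ⟨2, by simp only [Fin.zero_eta, Fin.mk_one, Fin.reduceFinMk]; rw [← hu_sum]; abel, by simp only [Fin.zero_eta, Fin.mk_one, Fin.reduceFinMk]; rw [← hv_sum]; abel⟩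
      · exact absurd rfl h
      · exact ⟨0, by simp only [Fin.zero_eta, Fin.mk_one, Fin.reduceFinMk]; rw [← hu_sum]; abel, by simp only [Fin.zero_eta, Fin.mk_one, Fin.reduceFinMk]; rw [← hv_sum]; abel⟩
      · exact ⟨1, by simp only [Fin.zero_eta, Fin.mk_one, Fin.reduceFinMk]; rw [← hu_sum]; abel, by simp only [Fin.zero_eta, Fin.mk_one, Fin.reduceFinMk]; rw [← hv_sum]; abel⟩
      · exact ⟨0, by simp only [Fin.zero_eta, Fin.mk_one, Fin.reduceFinMk]; rw [← hu_sum]; abel, by simp only [Fin.zero_eta, Fin.mk_one, Fin.reduceFinMk]; rw [← hv_sum]; abel⟩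
      · exact absurd rfl h
    have huab : u α * u β = 0 := huu α β γ husum
    have hubg : u β * u γ = 0 := huu β γ α (by rw [← husum]; abel)
    -- express the "other" projections
    have hx : u γ * v β = v β - u α * v β := by
      have hg : u γ = 1 - u α - u β := by rw [← husum]; abel
      rw [hg, sub_mul, sub_mul, one_mul, (h_edge β).1, sub_zero]
    have hy : u β * v γ = v γ - u α * v γ := by
      have hb : u β = 1 - u α - u γ := by rw [← husum]; abel
      rw [hb, sub_mul, sub_mul, one_mul, (h_edge γ).1, sub_zero]
    have hbc : v β + v γ = 1 - v α := by rw [← hvsum]; abel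
    have e1 : (1 - v α) * u α = u α := by
      rw [sub_mul, one_mul, (h_edge α).2, sub_zero]
    have hxy : u γ * v β * u α + u β * v γ * u α = 0 := by
      calc u γ * v β * u α + u β * v γ * u α
          = (v β + v γ) * u α - u α * ((v β + v γ) * u α) := by
            rw [hx, hy]; noncomm_ring
        _ = u α - u α * u α := by rw [hbc, e1]
        _ = 0 := by rw [hu_proj α, sub_self]
    have h5 : u β * (u γ * v β * u α) + u β * (u β * v γ * u α) = 0 := by
      rw [← mul_add, hxy, mul_zero]
    have h6 : u β * (u γ * v β * u α) = 0 := by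
      rw [show u β * (u γ * v β * u α) = (u β * u γ) * (v β * u α) from by noncomm_ring,
        hubg, zero_mul]
    have h7 : u β * (u β * v γ * u α) = u β * v γ * u α := by
      rw [show u β * (u β * v γ * u α) = (u β * u β) * v γ * u α from by noncomm_ring,
        hu_proj β]
    have hy0 : u β * v γ * u α = 0 := by
      rw [h6, h7, zero_add] at h5; exact h5
    have hx0 : u γ * v β * u α = 0 := by
      rw [hy0, add_zero] at hxy; exact hxy
    have hvu : v β * u α = u α * (v β * u α) := by
      calc v β * u α = (u α + u β + u γ) * (v β * u α) := by rw [husum, one_mul]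
        _ = u α * (v β * u α) + (u β * v β) * u α + u γ * v β * u α := by noncomm_ring
        _ = u α * (v β * u α) := by rw [(h_edge β).1, zero_mul, hx0, add_zero, add_zero]
    have h10 := congrArg conjTranspose hvu
    simp only [conjTranspose_mul, (hu_sa α).eq, (hv_sa β).eq] at h10
    rw [h10, hvu, mul_assoc]
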